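/- Let p ≥ 2, f ≥ 2p−1, and q ≥ 0 be integers with q ≤ f, and suppose p + q ≥ 2·∑_{i=0}^{⌈p/2⌉} (2(f+q)/(p+q) − 1)^i. Then (1 + 2(f−p)/(f+p))^(⌈p/2⌉+1) ≤ f − p + 1. -/
import Mathlib


/-- If `p ≥ 2`, `f ≥ 2p-1`, `0 ≤ q ≤ f` and
`p + q ≥ 2·∑_{i=0}^{⌈p/2⌉} (2(f+q)/(p+q) - 1)^i`, then
`(1 + 2(f-p)/(f+p))^(⌈p/2⌉+1) ≤ f - p + 1`. -/
theorem stmt_19 (p f q : ℕ) (hp : 2 ≤ p) (hf : 2 * p - 1 ≤ f) (hq : q ≤ f)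
    (h : 2 * ∑ i ∈ Finset.range (⌈(p : ℝ) / 2⌉₊ + 1),
        (2 * ((f : ℝ) + q) / ((p : ℝ) + q) - 1) ^ i ≤ ((p : ℝ) + q)) :
    (1 + 2 * ((f : ℝ) - p) / ((f : ℝ) + p)) ^ (⌈(p : ℝ) / 2⌉₊ + 1) ≤ (f : ℝ) - p + 1 := by
  set n := ⌈(p : ℝ) / 2⌉₊ + 1 with hn
  have hp' : (2:ℝ) ≤ p := by exact_mod_cast hp
  have hfn : 2 * p - 1 ≤ f := hf
  have hf' : 2 * (p:ℝ) - 1 ≤ f := by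
    have h1 : (1:ℕ) ≤ 2 * p := by omega
    have := (Nat.cast_le (α := ℝ)).mpr hfn
    rw [Nat.cast_sub h1] at this
    push_cast at this ⊢
    linarith
  have hq0 : (0:ℝ) ≤ q := Nat.cast_nonneg q
  have hq' : (q:ℝ) ≤ f := by exact_mod_cast hq
  have hfp : (p:ℝ) + 1 ≤ f := by linarith
  have hpq : (0:ℝ) < (p:ℝ) + q := by linarith
  have hfpp : (0:ℝ) < (f:ℝ) + p := by linarith
  set y := 2 * ((f : ℝ) + q) / ((p : ℝ) + q) - 1 with hy
  have hy1 : y - 1 = 2 * ((f:ℝ) - p) / ((p:ℝ) + q) := by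
    rw [hy]; field_simp; ring
  have hy1pos : 0 < y - 1 := by
    rw [hy1]; apply div_pos <;> linarith
  have hyne : y ≠ 1 := by intro hc; rw [hc] at hy1pos; norm_num at hy1pos
  rw [geom_sum_eq hyne] at h
  -- from h: y^n ≤ f - p + 1
  have hkey : (y - 1) * ((p:ℝ) + q) / 2 = (f:ℝ) - p := by
    rw [hy1]; field_simp
  have h2 : y ^ n - 1 ≤ (f:ℝ) - p := by
    rw [← hkey]
    have := (div_le_iff₀ hy1pos).mp (by linarith : (y ^ n - 1) / (y - 1) ≤ ((p:ℝ) + q) / 2)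
    calc y ^ n - 1 ≤ ((p:ℝ) + q) / 2 * (y - 1) := this
      _ = (y - 1) * ((p:ℝ) + q) / 2 := by ring
  have hb_nonneg : (0:ℝ) ≤ 1 + 2 * ((f:ℝ) - p) / ((f:ℝ) + p) := by
    have : (0:ℝ) ≤ 2 * ((f:ℝ) - p) / ((f:ℝ) + p) := by
      apply div_nonneg <;> linarith
    linarith
  have hb_le : 1 + 2 * ((f:ℝ) - p) / ((f:ℝ) + p) ≤ y := by
    have hnum : (0:ℝ) ≤ 2 * ((f:ℝ) - p) := by linarith
    have : 2 * ((f:ℝ) - p) / ((f:ℝ) + p) ≤ 2 * ((f:ℝ) - p) / ((p:ℝ) + q) :=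
      div_le_div_of_nonneg_left hnum hpq (by linarith)
    linarith [hy1]
  calc (1 + 2 * ((f:ℝ) - p) / ((f:ℝ) + p)) ^ n ≤ y ^ n :=
        pow_le_pow_left₀ hb_nonneg hb_le n
    _ ≤ (f:ℝ) - p + 1 := by linarith
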